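/- Let G be a graph that is not hamiltonian, C a longest cycle of G with an orientation, x a vertex not on C all of whose neighbors lie on C, with neighbors x_1, …, x_d on C. Then the set X = {x} ∪ {x_1⁺, …, x_d⁺} (successors on C of the neighbors of x) is an independent set of size d + 1. -/

import Mathlib

open SimpleGraph

variable {V : Type*}

/-- The number of connected components after deleting the vertex set `S`. -/
noncomputable def omegaDel [Fintype V] (G : SimpleGraph V) (S : Finset V) : ℕ :=
  Nat.card ((G.induce ((S : Set V)ᶜ)).ConnectedComponent)

/-- `G` is `m`-connected. -/
def IsKConn [Fintype V] (G : SimpleGraph V) (m : ℕ) : Prop :=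
  m < Fintype.card V ∧ ∀ S : Finset V, S.card < m → (G.induce ((S : Set V)ᶜ)).Connected

/-- The independence number of `G`. -/
noncomputable def alphaNum [Fintype V] (G : SimpleGraph V) : ℕ :=
  sSup {n | ∃ s : Finset V, (∀ a ∈ s, ∀ b ∈ s, ¬ G.Adj a b) ∧ s.card = n}

/-- The minimum degree of `G`. -/
noncomputable def minDeg [Fintype V] (G : SimpleGraph V) : ℕ :=
  sInf {d | ∃ v : V, (G.neighborSet v).ncard = d}

/-- The graph `K₂ ∪ kK₁`. -/
def K2kK1 (k : ℕ) : SimpleGraph (Fin 2 ⊕ Fin k) :=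
  SimpleGraph.fromRel fun a b => a.isLeft ∧ b.isLeft

/-- `G` contains no induced copy of `H`. -/
def IndFree {W : Type*} (H : SimpleGraph W) (G : SimpleGraph V) : Prop :=
  IsEmpty (H ↪g G)

/-- `G` has a hamiltonian cycle. -/
def Ham [DecidableEq V] (G : SimpleGraph V) : Prop :=
  ∃ (a : V) (p : G.Walk a a), p.IsHamiltonianCycle

/-- `G` is hamiltonian-connected. -/
def HamConn [DecidableEq V] (G : SimpleGraph V) : Prop :=
  ∀ a b : V, a ≠ b → ∃ p : G.Walk a b, p.IsHamiltonian

/-- The Petersen graph. -/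
def petersen : SimpleGraph (ZMod 5 ⊕ ZMod 5) :=
  SimpleGraph.fromRel fun a b =>
    match a, b with
    | Sum.inl i, Sum.inl j => i = j + 1
    | Sum.inr i, Sum.inr j => i = j + 2
    | Sum.inl i, Sum.inr j => i = j
    | _, _ => False


section Chain
variable {V : Type*} {G : SimpleGraph V} {n : ℕ} {f : ZMod n → V}

def chainWalk (hadj : ∀ i : ZMod n, G.Adj (f i) (f (i + 1))) :
    ∀ (k : ℕ) (a : ZMod n), G.Walk (f a) (f (a + k))
  | 0, a => Walk.nil.copy rfl (congrArg f (by push_cast; ring))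
  | k+1, a => (Walk.cons (hadj a) (chainWalk hadj k (a+1))).copy rfl
      (congrArg f (by push_cast; ring))

lemma chainWalk_length (hadj : ∀ i : ZMod n, G.Adj (f i) (f (i + 1))) :
    ∀ (k : ℕ) (a : ZMod n), (chainWalk hadj k a).length = k
  | 0, a => by simp [chainWalk]
  | k+1, a => by simp [chainWalk, chainWalk_length hadj k]

lemma chainWalk_support (hadj : ∀ i : ZMod n, G.Adj (f i) (f (i + 1))) :
    ∀ (k : ℕ) (a : ZMod n),
      (chainWalk hadj k a).support
        = (List.range (k+1)).map (fun t : ℕ => f (a + (t : ZMod n)))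
  | 0, a => by simp [chainWalk, List.range_succ]
  | k+1, a => by
      rw [List.range_succ_eq_map]
      simp only [chainWalk, Walk.support_copy, Walk.support_cons,
        chainWalk_support hadj k (a+1), List.map_cons, List.map_map]
      refine List.cons_eq_cons.mpr ⟨by simp, ?_⟩
      apply List.map_congr_left
      intro t _
      simp only [Function.comp_apply, Nat.succ_eq_add_one]
      congr 1
      push_cast
      ring

lemma not_mem_chainWalk_support (hadj : ∀ i : ZMod n, G.Adj (f i) (f (i + 1)))
    {x : V} (hx : x ∉ Set.range f) (k : ℕ) (a : ZMod n) :
    x ∉ (chainWalk hadj k a).support := by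
  rw [chainWalk_support]
  simp only [List.mem_map, not_exists]
  rintro t ⟨-, ht⟩
  exact hx ⟨_, ht⟩

lemma chainWalk_support_nodup (hinj : Function.Injective f)
    (hadj : ∀ i : ZMod n, G.Adj (f i) (f (i + 1))) {k : ℕ} (hk : k < n) (a : ZMod n) :
    (chainWalk hadj k a).support.Nodup := by
  rw [chainWalk_support]
  refine List.Nodup.map_on ?_ List.nodup_range
  intro s hs t ht hft
  rw [List.mem_range] at hs ht
  have := hinj hft
  have h1 : (s : ZMod n) = t := by
    have := add_left_cancel this
    exact this
  have := congrArg ZMod.val h1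
  rwa [ZMod.val_cast_of_lt (by omega), ZMod.val_cast_of_lt (by omega)] at this
end Chain

section Claims
variable {V : Type*} {G : SimpleGraph V} {n : ℕ} {f : ZMod n → V}

lemma no_adj_succ (hn : 3 ≤ n) (hinj : Function.Injective f)
    (hadj : ∀ i : ZMod n, G.Adj (f i) (f (i + 1)))
    (hlong : ∀ (v : V) (c : G.Walk v v), c.IsCycle → c.length ≤ n)
    {x : V} (hx : x ∉ Set.range f) {i : ZMod n}
    (hxi : G.Adj x (f i)) (hxsucc : G.Adj x (f (i+1))) : False := by
  haveI : NeZero n := ⟨by omega⟩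
  have hend : f (i + 1 + ((n-1 : ℕ) : ZMod n)) = f i := by
    congr 1
    have h1 : ((n : ℕ) : ZMod n) = 0 := ZMod.natCast_self n
    rw [Nat.cast_sub (by omega : 1 ≤ n), h1]
    push_cast
    ring
  set A : G.Walk (f (i+1)) (f i) :=
    (chainWalk hadj (n-1) (i+1)).copy rfl hend with hA
  have hAsupnd : A.support.Nodup := by
    rw [hA, Walk.support_copy]
    exact chainWalk_support_nodup hinj hadj (by omega) _
  have hxA : x ∉ A.support := by
    rw [hA, Walk.support_copy]
    exact not_mem_chainWalk_support hadj hx _ _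
  set P : G.Walk (f (i+1)) x := A.concat hxi.symm with hP
  have hPpath : P.IsPath := by
    rw [Walk.isPath_def, hP, Walk.support_concat]
    rw [List.nodup_append]
    exact ⟨hAsupnd, List.nodup_singleton x, by
      intro a ha b hb hab
      rw [List.mem_singleton] at hb
      exact hxA (by rw [← hb, ← hab]; exact ha)⟩
  have hPe : s(x, f (i+1)) ∉ P.edges := by
    rw [hP, Walk.edges_concat, List.concat_eq_append, List.mem_append]
    rintro (hmem | hmem)
    · exact hxA (Walk.fst_mem_support_of_mem_edges A hmem)
    · rw [List.mem_singleton, Sym2.eq_iff] at hmem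
      haveI : Fact (1 < n) := ⟨by omega⟩
      rcases hmem with ⟨h1, h2⟩ | ⟨h1, h2⟩
      · exact hx ⟨i, h1.symm⟩
      · exact one_ne_zero (add_eq_left.mp (hinj h2))
  have hcyc : (Walk.cons hxsucc P).IsCycle :=
    (Walk.cons_isCycle_iff P hxsucc).mpr ⟨hPpath, hPe⟩
  have hlen := hlong x (Walk.cons hxsucc P) hcyc
  have : P.length = n := by
    rw [hP, Walk.length_concat, hA, Walk.length_copy, chainWalk_length]
    omega
  rw [Walk.length_cons, this] at hlen
  omega
end Claims

section Claim2
variable {V : Type*} {G : SimpleGraph V} {n : ℕ} {f : ZMod n → V}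

lemma no_adj_cross (hn : 3 ≤ n) (hinj : Function.Injective f)
    (hadj : ∀ i : ZMod n, G.Adj (f i) (f (i + 1)))
    (hlong : ∀ (v : V) (c : G.Walk v v), c.IsCycle → c.length ≤ n)
    {x : V} (hx : x ∉ Set.range f) {i j : ZMod n} (hij : i ≠ j)
    (hxi : G.Adj x (f i)) (hxj : G.Adj x (f j))
    (hcross : G.Adj (f (i+1)) (f (j+1))) : False := by
  haveI : NeZero n := ⟨by omega⟩
  haveI : Fact (1 < n) := ⟨by omega⟩
  set a : ℕ := (i - j).val with haa
  have ha1 : 1 ≤ a := by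
    rcases Nat.eq_zero_or_pos a with h | h
    · exact absurd (sub_eq_zero.mp ((ZMod.val_eq_zero _).mp h)) hij
    · exact h
  have ha2 : a < n := ZMod.val_lt _
  have ha' : ((a : ℕ) : ZMod n) = i - j := by
    rw [haa, ZMod.natCast_val, ZMod.cast_id]
  set k : ℕ := a - 1 with hk
  set m : ℕ := n - a - 1 with hm
  have hcastA : ((k : ℕ) : ZMod n) = i - j - 1 := by
    rw [hk, Nat.cast_sub ha1, ha', Nat.cast_one]
  have hcastB : ((m : ℕ) : ZMod n) = j - i - 1 := by
    rw [hm, show n - a - 1 = n - (a + 1) by omega, Nat.cast_sub (by omega : a + 1 ≤ n),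
      ZMod.natCast_self]
    push_cast [ha']
    ring
  set A : G.Walk (f (j+1)) (f i) :=
    (chainWalk hadj k (j+1)).copy rfl (congrArg f (by rw [hcastA]; ring)) with hA
  set B : G.Walk (f (i+1)) (f j) :=
    (chainWalk hadj m (i+1)).copy rfl (congrArg f (by rw [hcastB]; ring)) with hB
  have hAs : A.support = (List.range (k+1)).map (fun t : ℕ => f (j+1 + (t : ZMod n))) := by
    rw [hA, Walk.support_copy, chainWalk_support]
  have hBs : B.support = (List.range (m+1)).map (fun t : ℕ => f (i+1 + (t : ZMod n))) := by
    rw [hB, Walk.support_copy, chainWalk_support]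
  have hAnd : A.support.Nodup := by
    rw [hA, Walk.support_copy]; exact chainWalk_support_nodup hinj hadj (by omega) _
  have hBnd : B.support.Nodup := by
    rw [hB, Walk.support_copy]; exact chainWalk_support_nodup hinj hadj (by omega) _
  have hxA : x ∉ A.support := by
    rw [hA, Walk.support_copy]; exact not_mem_chainWalk_support hadj hx _ _
  have hxB : x ∉ B.support := by
    rw [hB, Walk.support_copy]; exact not_mem_chainWalk_support hadj hx _ _
  have hdisj : ∀ u, u ∈ A.support → u ∈ B.support → False := by
    intro u huA huB
    rw [hAs, List.mem_map] at huA
    rw [hBs, List.mem_map] at huB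
    obtain ⟨t, ht, hut⟩ := huA
    obtain ⟨s, hs, hus⟩ := huB
    rw [List.mem_range] at ht hs
    have heq : j + 1 + (t : ZMod n) = i + 1 + (s : ZMod n) := hinj (hut.trans hus.symm)
    have heq2 : ((t : ℕ) : ZMod n) = ((a + s : ℕ) : ZMod n) := by
      push_cast [ha']
      linear_combination heq
    have := congrArg ZMod.val heq2
    rw [ZMod.val_cast_of_lt (by omega), ZMod.val_cast_of_lt (by omega)] at this
    omega
  set Q : G.Walk (f (j+1)) x := Walk.cons hcross.symm (B.concat hxj.symm) with hQ
  set P : G.Walk (f i) x := A.reverse.append Q with hP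
  have hPsup : P.support = A.support.reverse ++ (B.support ++ [x]) := by
    rw [hP, Walk.support_append, Walk.support_reverse, hQ, Walk.support_cons,
      Walk.support_concat]
    simp
  have hPpath : P.IsPath := by
    rw [Walk.isPath_def, hPsup, List.nodup_append, List.nodup_append]
    refine ⟨List.nodup_reverse.mpr hAnd, ⟨hBnd, List.nodup_singleton x, ?_⟩, ?_⟩
    · intro u huB hux hux' h
      rw [List.mem_singleton] at hux'
      exact hxB (by rw [← hux', ← h]; exact huB)
    · intro u huA hu3 hu2 h
      subst h
      rw [List.mem_reverse] at huA
      rw [List.mem_append, List.mem_singleton] at hu2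
      rcases hu2 with hu2 | rfl
      · exact hdisj u huA hu2
      · exact hxA huA
  have hPe : s(x, f i) ∉ P.edges := by
    rw [hP, Walk.edges_append, Walk.edges_reverse, hQ, Walk.edges_cons, Walk.edges_concat,
      List.concat_eq_append]
    simp only [List.mem_append, List.mem_reverse, List.mem_cons, List.mem_singleton]
    rintro (hmem | hmem | hmem | hmem | hmem)
    · exact hxA (Walk.fst_mem_support_of_mem_edges A hmem)
    · rw [Sym2.eq_iff] at hmem
      rcases hmem with ⟨h1, h2⟩ | ⟨h1, h2⟩
      · exact hx ⟨j + 1, h1.symm⟩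
      · exact hx ⟨i + 1, h1.symm⟩
    · exact hxB (Walk.fst_mem_support_of_mem_edges B hmem)
    · rw [Sym2.eq_iff] at hmem
      rcases hmem with ⟨h1, h2⟩ | ⟨h1, h2⟩
      · exact hx ⟨j, h1.symm⟩
      · exact hij (hinj h2)
    · simp at hmem
  have hcyc : (Walk.cons hxi P).IsCycle :=
    (Walk.cons_isCycle_iff P hxi).mpr ⟨hPpath, hPe⟩
  have hlen := hlong x (Walk.cons hxi P) hcyc
  have hPl : P.length = n := by
    rw [hP, Walk.length_append, Walk.length_reverse, hA, Walk.length_copy, chainWalk_length,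
      hQ, Walk.length_cons, Walk.length_concat, hB, Walk.length_copy, chainWalk_length]
    omega
  rw [Walk.length_cons, hPl] at hlen
  omega
end Claim2

/-- For a vertex `x` off a longest cycle `C` of a non-hamiltonian graph with all
neighbors on `C`, the set `{x}` together with the successors of the neighbors of `x`
is an independent set of size `d + 1`. -/
theorem stmt_18 {V : Type*} [Fintype V] [DecidableEq V] (G : SimpleGraph V)
    (hnh : ¬ Ham G) (n : ℕ) (hn : 3 ≤ n)
    (f : ZMod n → V) (hinj : Function.Injective f)
    (hadj : ∀ i : ZMod n, G.Adj (f i) (f (i + 1)))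
    (hlong : ∀ (v : V) (c : G.Walk v v), c.IsCycle → c.length ≤ n)
    (x : V) (hx : x ∉ Set.range f) (hNx : G.neighborSet x ⊆ Set.range f)
    (d : ℕ) (hd : (G.neighborSet x).ncard = d) :
    (({x} ∪ {w | ∃ i : ZMod n, G.Adj x (f i) ∧ w = f (i + 1)} : Set V).Pairwise
      fun a b => ¬ G.Adj a b) ∧
    ({x} ∪ {w | ∃ i : ZMod n, G.Adj x (f i) ∧ w = f (i + 1)} : Set V).ncard = d + 1 := by
  set S : Set V := {w | ∃ i : ZMod n, G.Adj x (f i) ∧ w = f (i + 1)} with hSdef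
  have hxS : x ∉ S := by
    rintro ⟨i, -, hxe⟩
    exact hx ⟨i + 1, hxe.symm⟩
  constructor
  · intro u hu v hv huv
    rcases hu with rfl | ⟨i, hxi, rfl⟩
    · rcases hv with rfl | ⟨j, hxj, rfl⟩
      · exact absurd rfl huv
      · exact fun h => no_adj_succ hn hinj hadj hlong hx hxj h
    · rcases hv with rfl | ⟨j, hxj, rfl⟩
      · exact fun h => no_adj_succ hn hinj hadj hlong hx hxi h.symm
      · refine fun h => no_adj_cross hn hinj hadj hlong hx ?_ hxi hxj h
        rintro rfl
        exact huv rfl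
  · have hS : S = (fun i : ZMod n => f (i + 1)) '' {i : ZMod n | G.Adj x (f i)} := by
      ext w
      constructor
      · rintro ⟨i, hxi, rfl⟩
        exact ⟨i, hxi, rfl⟩
      · rintro ⟨i, hxi, rfl⟩
        exact ⟨i, hxi, rfl⟩
    have hinj' : Function.Injective (fun i : ZMod n => f (i + 1)) := by
      intro a b hab
      have := hinj hab
      exact add_right_cancel this
    have hN : G.neighborSet x = f '' {i : ZMod n | G.Adj x (f i)} := by
      ext v
      constructor
      · intro hv
        obtain ⟨i, rfl⟩ := hNx hv
        exact ⟨i, hv, rfl⟩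
      · rintro ⟨i, hxi, rfl⟩
        exact hxi
    have h1 : S.ncard = d := by
      rw [hS, Set.ncard_image_of_injective _ hinj', ← Set.ncard_image_of_injective _ hinj,
        ← hN, hd]
    rw [Set.singleton_union, Set.ncard_insert_of_notMem hxS S.toFinite, h1]
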